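/- Let μ be the measure on ℝ² given by μ = (1/2)·(Exp(1) ⊗ Exp(3)) + (1/2)·T, where Exp(λ) denotes the exponential distribution with rate λ (density λe^{−λx} on [0,∞)), Exp(1) ⊗ Exp(3) is the product measure, and T is the pushforward of Exp(2) under the map y ↦ (y, y). Then for every x¹, x² ∈ ℝ, n·μ( ((log n)/2 + x¹, ∞) × ((log n)/2 + x², ∞) ) → (1/2)·e^{−2·max(x¹, x²)} as n → ∞. -/

import Mathlib

open MeasureTheory Filter Set
open scoped ENNReal
open ProbabilityTheory Real

/-- The exponential distribution with rate `r`: density `r * exp (-(r * x))` on `[0, ∞)`. -/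
noncomputable def expMeas (r : ℝ) : Measure ℝ :=
  volume.withDensity fun x => ENNReal.ofReal (if 0 ≤ x then r * Real.exp (-(r * x)) else 0)

/-- The mixture measure of Example 3.7:
`μ = (1/2)·(Exp(1) ⊗ Exp(3)) + (1/2)·(pushforward of Exp(2) under y ↦ (y,y))`. -/
noncomputable def mixMeas : Measure (ℝ × ℝ) :=
  (1/2 : ℝ≥0∞) • (expMeas 1).prod (expMeas 3) +
    (1/2 : ℝ≥0∞) • (expMeas 2).map (fun y => (y, y))


lemma expMeas_eq (r : ℝ) : expMeas r = expMeasure r := by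
  rw [expMeas, expMeasure, gammaMeasure]
  congr 1
  ext x
  rw [← exponentialPDF_eq]
  rfl

lemma expMeas_Iic {r t : ℝ} (hr : 0 < r) (ht : 0 ≤ t) :
    expMeas r (Iic t) = ENNReal.ofReal (1 - Real.exp (-(r * t))) := by
  rw [expMeas_eq, expMeasure, gammaMeasure, withDensity_apply _ measurableSet_Iic]
  have := lintegral_exponentialPDF_eq_antiDeriv hr t
  rw [if_pos ht] at this
  exact this

lemma expMeas_Ioi {r t : ℝ} (hr : 0 < r) (ht : 0 ≤ t) :
    expMeas r (Ioi t) = ENNReal.ofReal (Real.exp (-(r * t))) := by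
  have hp : IsProbabilityMeasure (expMeas r) := by
    rw [expMeas_eq]; exact isProbabilityMeasure_expMeasure hr
  have h1 : expMeas r (Ioi t) = 1 - expMeas r (Iic t) := by
    rw [← compl_Iic]
    exact prob_compl_eq_one_sub measurableSet_Iic
  have he : Real.exp (-(r * t)) ≤ 1 :=
    Real.exp_le_one_iff.2 (neg_nonpos.2 (mul_nonneg hr.le ht))
  rw [h1, expMeas_Iic hr ht, ← ENNReal.ofReal_one,
    ← ENNReal.ofReal_sub _ (sub_nonneg.2 he)]
  norm_num

instance (r : ℝ) : SFinite (expMeas r) := by unfold expMeas; infer_instance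


lemma mix_apply {a b : ℝ} (ha : 0 ≤ a) (hb : 0 ≤ b) :
    (mixMeas (Ioi a ×ˢ Ioi b)).toReal
      = 1/2 * (Real.exp (-a) * Real.exp (-(3*b))) + 1/2 * Real.exp (-(2 * max a b)) := by
  have hs : MeasurableSet (Ioi a ×ˢ Ioi b) := measurableSet_Ioi.prod measurableSet_Ioi
  have hm : Measurable (fun y : ℝ => (y, y)) := by fun_prop
  have hpre : (fun y : ℝ => (y, y)) ⁻¹' (Ioi a ×ˢ Ioi b) = Ioi (max a b) := by
    ext y; simp [max_lt_iff]
  rw [mixMeas, Measure.add_apply, Measure.smul_apply, Measure.smul_apply,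
    Measure.prod_prod, Measure.map_apply hm hs, hpre,
    expMeas_Ioi one_pos ha, expMeas_Ioi (by norm_num) hb,
    expMeas_Ioi (by norm_num) (le_max_of_le_left ha)]
  rw [smul_eq_mul, smul_eq_mul, ← ENNReal.ofReal_mul (Real.exp_nonneg _),
    show (1/2 : ℝ≥0∞) = ENNReal.ofReal (1/2) by rw [one_div, one_div, ENNReal.ofReal_inv_of_pos two_pos, ENNReal.ofReal_ofNat],
    ← ENNReal.ofReal_mul (by norm_num), ← ENNReal.ofReal_mul (by norm_num),
    ← ENNReal.ofReal_add (by positivity) (by positivity), ENNReal.toReal_ofReal (by positivity)]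
  norm_num

theorem mixture_exp_hda_medium_cone_upper_rectangle :
    ∀ x1 x2 : ℝ,
      Tendsto (fun n : ℕ =>
          (n : ℝ) * (mixMeas
            (Ioi (Real.log n / 2 + x1) ×ˢ Ioi (Real.log n / 2 + x2))).toReal)
        atTop (nhds ((1/2) * Real.exp (-(2 * max x1 x2)))) := by
  intro x1 x2
  set m := max x1 x2 with hm
  have h0 : Tendsto (fun n : ℕ => Real.log n) atTop atTop :=
    Real.tendsto_log_atTop.comp tendsto_natCast_atTop_atTop
  have hlim : Tendsto (fun n : ℕ =>
      1/2 * Real.exp (-(x1 + 3*x2)) * (1/(n:ℝ)) + 1/2 * Real.exp (-(2*m)))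
      atTop (nhds ((1/2) * Real.exp (-(2 * m)))) := by
    have h1 := (tendsto_const_nhds (x := 1/2 * Real.exp (-(x1+3*x2))) (f := atTop (α := ℕ))).mul
      tendsto_one_div_atTop_nhds_zero_nat
    simpa using h1.add (tendsto_const_nhds (x := 1/2 * Real.exp (-(2*m))))
  refine Tendsto.congr' ?_ hlim
  filter_upwards [h0.eventually_ge_atTop (2*|x1| ⊔ 2*|x2|), eventually_ge_atTop 1] with n hln hn1
  have hn0 : (0:ℝ) < n := by exact_mod_cast hn1
  have hexp : Real.exp (Real.log n) = n := Real.exp_log hn0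
  have hl1 : 2*|x1| ≤ Real.log n := le_trans (le_max_left _ _) hln
  have hl2 : 2*|x2| ≤ Real.log n := le_trans (le_max_right _ _) hln
  have ha : 0 ≤ Real.log n / 2 + x1 := by
    have := abs_le.1 (show |x1| ≤ Real.log n / 2 by linarith); linarith [this.1]
  have hb : 0 ≤ Real.log n / 2 + x2 := by
    have := abs_le.1 (show |x2| ≤ Real.log n / 2 by linarith); linarith [this.1]
  rw [mix_apply ha hb]
  have hmax : max (Real.log n / 2 + x1) (Real.log n / 2 + x2) = Real.log n / 2 + m := by
    rw [hm, ← max_add_add_left]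
  rw [hmax]
  have hn2 : ((n:ℝ))^2 = Real.exp (2 * Real.log n) := by
    rw [two_mul, Real.exp_add, hexp]; ring
  have key1 : Real.exp (-(Real.log n / 2 + x1)) * Real.exp (-(3*(Real.log n / 2 + x2)))
      = Real.exp (-(x1 + 3*x2)) / (n:ℝ)^2 := by
    rw [eq_div_iff (by positivity), hn2, ← Real.exp_add, ← Real.exp_add]
    congr 1; ring
  have key2 : Real.exp (-(2*(Real.log n / 2 + m))) = Real.exp (-(2*m)) / n := by
    rw [eq_div_iff (ne_of_gt hn0)]
    nth_rewrite 2 [← hexp]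
    rw [← Real.exp_add]; congr 1; ring
  rw [key1, key2]
  field_simp
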